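/- For every RCGBAR G and every kind of preferences pref ∈ {ct, ca, pca}, the set of pure Nash equilibria of G with respect to the multiset-inclusion-based preference ≺^pref equals the set of pure Nash equilibria with respect to the cardinality-based preference ≺'^pref. -/

import Mathlib

open scoped Classical

/-- A resource contribution game over atomic resource type `Res` with player set `ι`:
each player has a goal (a resource bundle, i.e. a multiset of atomic resources) and
an endowment (a resource bag, i.e. a multiset of resource bundles). -/
structure RCG (Res ι : Type*) where
  goal : ι → Multiset Res
  endow : ι → Multiset (Multiset Res)

namespace RCG

variable {Res ι : Type*} [Fintype ι]

/-- A profile assigns to each player a bag (his contribution). -/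
abbrev Profile (Res ι : Type*) := ι → Multiset (Multiset Res)

/-- Outcome of a profile: the multiset sum of all contributions. -/
def out (P : Profile Res ι) : Multiset (Multiset Res) := ∑ i, P i

/-- The bag `X` can be transformed into the bundle `B`: `♭(B) ⊆ ♭•(X)`. -/
def Trans (X : Multiset (Multiset Res)) (B : Multiset Res) : Prop := B ≤ X.sum

/-- Player `i` is potentially satisfied by profile `P`. -/
def Psat (G : RCG Res ι) (P : Profile Res ι) (i : ι) : Prop :=
  Trans (out P) (G.goal i)

/-- The set of players potentially satisfied by `P`. -/
noncomputable def psatPlayers (G : RCG Res ι) (P : Profile Res ι) : Finset ι :=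
  Finset.univ.filter fun i => Psat G P i

/-- The profile `P` is contentious. -/
def Contentious (G : RCG Res ι) (P : Profile Res ι) : Prop :=
  ¬ Trans (out P) (∑ j ∈ psatPlayers G P, G.goal j)

/-- Restriction of bundle `B` to the resource types occurring in `C`. -/
noncomputable def restr (B C : Multiset Res) : Multiset Res := B.filter (· ∈ C)

/-- The profile `P` is contentious for player `i`. -/
def ContentiousFor (G : RCG Res ι) (P : Profile Res ι) (i : ι) : Prop :=
  Psat G P i ∧ ¬ Trans (out P) (∑ j ∈ psatPlayers G P, restr (G.goal j) (G.goal i))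

/-- The three kinds of preferences: contention-tolerant, (public) contention-averse,
private contention-averse. -/
inductive Pref | ct | ca | pca

/-- `P` is a good profile for player `i` according to preference kind `pref`. -/
def Good (pref : Pref) (G : RCG Res ι) (P : Profile Res ι) (i : ι) : Prop :=
  match pref with
  | .ct => Psat G P i
  | .ca => Psat G P i ∧ ¬ Contentious G P
  | .pca => Psat G P i ∧ ¬ ContentiousFor G P i

/-- Player `i` strictly prefers `P` over `Q` (i.e. `Q ≺^pref_i P`). -/
def Prefers (pref : Pref) (G : RCG Res ι) (i : ι) (Q P : Profile Res ι) : Prop :=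
  (¬ Good pref G P i ∧ ¬ Good pref G Q i ∧ P i < Q i) ∨
  (Good pref G P i ∧ ¬ Good pref G Q i) ∨
  (Good pref G P i ∧ Good pref G Q i ∧ P i < Q i)

/-- `C` is a profitable deviation for player `i` from profile `P`. -/
noncomputable def ProfDev (pref : Pref) (G : RCG Res ι) (P : Profile Res ι) (i : ι)
    (C : Multiset (Multiset Res)) : Prop :=
  C ≤ G.endow i ∧ Prefers pref G i P (Function.update P i C)

/-- `P` is a pure Nash equilibrium of `G` according to `pref`:
`P` is a profile of `G` and no player has a profitable deviation. -/
noncomputable def NE (pref : Pref) (G : RCG Res ι) (P : Profile Res ι) : Prop :=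
  (∀ i, P i ≤ G.endow i) ∧ ∀ i C, ¬ ProfDev pref G P i C

/-- `G` is an RCG with endowments as bags of atomic resources. -/
def IsRCGBAR (G : RCG Res ι) : Prop :=
  ∀ i, ∀ B ∈ G.endow i, ∃ r : Res, B = {r}

/-- `G` has independent objectives. -/
def IndepObjectives (G : RCG Res ι) : Prop :=
  ∀ i j : ι, i ≠ j → ∀ r : Res, r ∈ G.goal i → r ∉ G.goal j

end RCG

namespace RCG

variable {Res ι : Type*} [Fintype ι]

/-- Cardinality-based strict preference: `Q ≺'^pref_i P`. -/
def PrefersCard (pref : Pref) (G : RCG Res ι) (i : ι) (Q P : Profile Res ι) : Prop :=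
  (¬ Good pref G P i ∧ ¬ Good pref G Q i ∧
    Multiset.card (P i) < Multiset.card (Q i)) ∨
  (Good pref G P i ∧ ¬ Good pref G Q i) ∨
  (Good pref G P i ∧ Good pref G Q i ∧
    Multiset.card (P i) < Multiset.card (Q i))

/-- Profitable deviation with respect to the cardinality-based preference. -/
noncomputable def ProfDevCard (pref : Pref) (G : RCG Res ι) (P : Profile Res ι)
    (i : ι) (C : Multiset (Multiset Res)) : Prop :=
  C ≤ G.endow i ∧ PrefersCard pref G i P (Function.update P i C)

/-- Pure Nash equilibrium with respect to the cardinality-based preference. -/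
noncomputable def NECard (pref : Pref) (G : RCG Res ι) (P : Profile Res ι) : Prop :=
  (∀ i, P i ≤ G.endow i) ∧ ∀ i C, ¬ ProfDevCard pref G P i C

end RCG

namespace RCG

variable {Res ι : Type*} [Fintype ι]

private lemma sum_sum_bag (s : Finset ι) (f : ι → Multiset (Multiset Res)) :
    (∑ j ∈ s, f j).sum = ∑ j ∈ s, (f j).sum := by
  classical
  induction s using Finset.induction_on with
  | empty => simp
  | insert _ _ h ih => simp [Finset.sum_insert h, Multiset.sum_add, ih]

private lemma out_sum (P : Profile Res ι) : (out P).sum = ∑ j, (P j).sum :=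
  sum_sum_bag _ _

private lemma out_update_sum (P : Profile Res ι) (i : ι) (C : Multiset (Multiset Res)) :
    (out (Function.update P i C)).sum = C.sum + ∑ j ∈ Finset.univ.erase i, (P j).sum := by
  rw [out_sum]
  have h1 : (fun j => ((Function.update P i C) j).sum)
      = Function.update (fun j => (P j).sum) i C.sum := by
    funext j
    exact Function.apply_update (fun _ m => Multiset.sum m) P i C j
  calc ∑ j, ((Function.update P i C) j).sum
      = ∑ j, Function.update (fun j => (P j).sum) i C.sum j := by rw [h1]
    _ = C.sum + ∑ j ∈ Finset.univ \ {i}, (P j).sum :=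
        Finset.sum_update_of_mem (Finset.mem_univ i) _ _
    _ = C.sum + ∑ j ∈ Finset.univ.erase i, (P j).sum := by rw [Finset.erase_eq]

/-- Satisfied players as a function of the flattened outcome. -/
private noncomputable def sat (G : RCG Res ι) (F : Multiset Res) : Finset ι :=
  Finset.univ.filter fun j => G.goal j ≤ F

/-- Goodness as a predicate on the flattened outcome. -/
private def goodF (pref : Pref) (G : RCG Res ι) (i : ι) (F : Multiset Res) : Prop :=
  match pref with
  | .ct => G.goal i ≤ F
  | .ca => G.goal i ≤ F ∧ ∑ j ∈ sat G F, G.goal j ≤ F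
  | .pca => G.goal i ≤ F ∧ ∑ j ∈ sat G F, restr (G.goal j) (G.goal i) ≤ F

private lemma psatPlayers_eq (G : RCG Res ι) (P : Profile Res ι) :
    psatPlayers G P = sat G (out P).sum := by
  ext j
  simp only [psatPlayers, sat, Finset.mem_filter, Finset.mem_univ, true_and]
  rfl

private lemma good_iff (pref : Pref) (G : RCG Res ι) (P : Profile Res ι) (i : ι) :
    Good pref G P i ↔ goodF pref G i (out P).sum := by
  cases pref with
  | ct => exact Iff.rfl
  | ca =>
    simp only [Good, goodF, Contentious, psatPlayers_eq, Psat, Trans, not_not]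
  | pca =>
    simp only [Good, goodF, ContentiousFor, psatPlayers_eq, Psat, Trans]
    constructor
    · rintro ⟨h1, h2⟩
      refine ⟨h1, ?_⟩
      by_contra h3
      exact h2 ⟨h1, h3⟩
    · rintro ⟨h1, h2⟩
      exact ⟨h1, fun h => h.2 h2⟩

private lemma le_inf_add {S r x y : Multiset Res} (h1 : S ≤ x + r) (h2 : S ≤ y + r) :
    S ≤ x ∩ y + r := by
  rw [Multiset.le_iff_count] at h1 h2 ⊢
  intro a
  have ha1 := h1 a
  have ha2 := h2 a
  simp only [Multiset.count_add, Multiset.count_inter] at *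
  omega

private lemma sat_mono (G : RCG Res ι) {F F' : Multiset Res} (h : F ≤ F') :
    sat G F ⊆ sat G F' := by
  intro j hj
  simp only [sat, Finset.mem_filter, Finset.mem_univ, true_and] at hj ⊢
  exact le_trans hj h

private lemma goodF_inf (pref : Pref) (G : RCG Res ι) (i : ι) {r x y : Multiset Res}
    (hx : goodF pref G i (x + r)) (hy : goodF pref G i (y + r)) :
    goodF pref G i (x ∩ y + r) := by
  have hlex : x ∩ y + r ≤ x + r := add_le_add_left (Multiset.inter_le_left : x ∩ y ≤ x) r
  have hley : x ∩ y + r ≤ y + r := add_le_add_left (Multiset.inter_le_right : x ∩ y ≤ y) r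
  cases pref with
  | ct => exact le_inf_add hx hy
  | ca =>
    refine ⟨le_inf_add hx.1 hy.1, le_inf_add ?_ ?_⟩
    · exact le_trans (Finset.sum_le_sum_of_subset (sat_mono G hlex)) hx.2
    · exact le_trans (Finset.sum_le_sum_of_subset (sat_mono G hley)) hy.2
  | pca =>
    refine ⟨le_inf_add hx.1 hy.1, le_inf_add ?_ ?_⟩
    · exact le_trans (Finset.sum_le_sum_of_subset (sat_mono G hlex)) hx.2
    · exact le_trans (Finset.sum_le_sum_of_subset (sat_mono G hley)) hy.2

private lemma bag_repr {X : Multiset (Multiset Res)} (h : ∀ B ∈ X, ∃ r : Res, B = {r}) :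
    X.sum.map (fun r => ({r} : Multiset Res)) = X := by
  induction X using Multiset.induction_on with
  | empty => simp
  | cons B X ih =>
    obtain ⟨r, rfl⟩ := h B (Multiset.mem_cons_self _ _)
    rw [Multiset.sum_cons, Multiset.map_add, ih fun B hB => h B (Multiset.mem_cons_of_mem hB)]
    simp

private lemma bag_card {X : Multiset (Multiset Res)} (h : ∀ B ∈ X, ∃ r : Res, B = {r}) :
    Multiset.card X.sum = Multiset.card X := by
  conv_rhs => rw [← bag_repr h]
  simp

end RCG

/-- in every RCGBAR, for every kind of preferences, the Nash equilibria
with respect to the multiset-inclusion-based preference coincide with those for the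
cardinality-based preference. -/
theorem RCGBAR_NE_eq_NECard {Res ι : Type*} [Fintype ι]
    (G : RCG Res ι) (hbar : RCG.IsRCGBAR G) (pref : RCG.Pref) :
    ∀ P : RCG.Profile Res ι, RCG.NE pref G P ↔ RCG.NECard pref G P := by
  intro P
  classical
  constructor
  · rintro ⟨hP, hND⟩
    refine ⟨hP, fun i C hdev => ?_⟩
    obtain ⟨hC, hpref⟩ := hdev
    simp only [RCG.PrefersCard, Function.update_self] at hpref
    rcases hpref with ⟨hg', hg, hlt⟩ | ⟨hg', hg⟩ | ⟨hg', hg, hlt⟩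
    · -- both not good, card C < card (P i)
      by_cases hD : ∃ D, D ≤ G.endow i ∧ RCG.Good pref G (Function.update P i D) i
      · obtain ⟨D, hDe, hDg⟩ := hD
        exact hND i D ⟨hDe, Or.inr (Or.inl ⟨hDg, hg⟩)⟩
      · push_neg at hD
        have hne : P i ≠ 0 := by
          intro h
          rw [h] at hlt
          simp at hlt
        obtain ⟨x, hx⟩ := Multiset.exists_mem_of_ne_zero hne
        have hle : (P i).erase x ≤ G.endow i :=
          le_trans (Multiset.erase_le x (P i)) (hP i)
        refine hND i ((P i).erase x) ⟨hle, Or.inl ⟨hD _ hle, hg, ?_⟩⟩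
        simp only [Function.update_self]
        exact Multiset.erase_lt.2 hx
    · exact hND i C ⟨hC, Or.inr (Or.inl ⟨hg', hg⟩)⟩
    · -- both good, card C < card (P i)
      set n := C.sum ∩ (P i).sum with hn
      set C' := n.map (fun r => ({r} : Multiset Res)) with hC'
      have hPi_singl : ∀ B ∈ P i, ∃ r : Res, B = {r} :=
        fun B hB => hbar i B (Multiset.mem_of_le (hP i) hB)
      have hC_singl : ∀ B ∈ C, ∃ r : Res, B = {r} :=
        fun B hB => hbar i B (Multiset.mem_of_le hC hB)
      have hrepr : ((P i).sum).map (fun r => ({r} : Multiset Res)) = P i :=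
        RCG.bag_repr hPi_singl
      have hC'le : C' ≤ P i := by
        rw [← hrepr]
        exact Multiset.map_le_map Multiset.inter_le_right
      have hcard : Multiset.card C' < Multiset.card (P i) := by
        have h1 : Multiset.card C' = Multiset.card n := Multiset.card_map _ _
        have h2 : Multiset.card n ≤ Multiset.card C.sum :=
          Multiset.card_le_card Multiset.inter_le_left
        have h3 : Multiset.card C.sum = Multiset.card C := RCG.bag_card hC_singl
        omega
      have hlt' : C' < P i :=
        lt_of_le_of_ne hC'le (fun h => by rw [h] at hcard; exact lt_irrefl _ hcard)
      have hgood' : RCG.Good pref G (Function.update P i C') i := by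
        rw [RCG.good_iff] at hg hg' ⊢
        rw [RCG.out_update_sum] at hg' ⊢
        rw [RCG.out_sum] at hg
        have hsplit : (∑ j, (P j).sum)
            = (P i).sum + ∑ j ∈ Finset.univ.erase i, (P j).sum :=
          (Finset.add_sum_erase _ _ (Finset.mem_univ i)).symm
        rw [hsplit] at hg
        have hsum : C'.sum = n := Multiset.sum_map_singleton n
        rw [hsum]
        exact RCG.goodF_inf pref G i hg' hg
      refine hND i C' ⟨le_trans hC'le (hP i), Or.inr (Or.inr ⟨hgood', hg, ?_⟩)⟩
      simp only [Function.update_self]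
      exact hlt'
  · rintro ⟨hP, hND⟩
    refine ⟨hP, fun i C hdev => ?_⟩
    obtain ⟨hC, hpref⟩ := hdev
    apply hND i C
    refine ⟨hC, ?_⟩
    rcases hpref with ⟨h1, h2, h3⟩ | ⟨h1, h2⟩ | ⟨h1, h2, h3⟩
    · exact Or.inl ⟨h1, h2, Multiset.card_lt_card h3⟩
    · exact Or.inr (Or.inl ⟨h1, h2⟩)
    · exact Or.inr (Or.inr ⟨h1, h2, Multiset.card_lt_card h3⟩)
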